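/- Let K be a field of characteristic zero, r ≥ 1 an integer, and A an r×r matrix with entries in K((t)). Then the set of solutions f ∈ K((t))^r of the linear differential system f' + A·f = 0 (componentwise derivative) is a K-vector subspace of dimension at most r. (These solutions are the horizontal sections E^∇ of the rank-r formal connection ∇ = d + A, whose finite-dimensionality over K is used in the Fredholm theory of connections over K((t)).) -/

import Mathlib

/-- The formal derivative of a Laurent series `f = Σₙ aₙ tⁿ ∈ K((t))`,
namely `f' = Σₙ n aₙ tⁿ⁻¹`. -/
noncomputable def lsDeriv {K : Type*} [Field K] (f : LaurentSeries K) : LaurentSeries K where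
  coeff n := (n + 1) • f.coeff (n + 1)
  isPWO_support' := by
    apply Set.IsPWO.mono (f.isPWO_support'.image_of_monotone (f := fun n : ℤ => n - 1)
      (fun x y hxy => by simpa using hxy))
    intro n hn
    have : f.coeff (n + 1) ≠ 0 := by
      intro h
      simp [Function.mem_support, h] at hn
    exact ⟨n + 1, this, by ring⟩

namespace LsAux

variable {K : Type*} [Field K]

lemma lsDeriv_coeff (f : LaurentSeries K) (n : ℤ) :
    (lsDeriv f).coeff n = (n + 1) • f.coeff (n + 1) := rfl

lemma support_lsDeriv (f : LaurentSeries K) :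
    (lsDeriv f).support ⊆ (fun n : ℤ => n - 1) '' f.support := by
  intro n hn
  have : f.coeff (n + 1) ≠ 0 := by
    intro h
    simp [Function.mem_support, lsDeriv_coeff, h] at hn
  exact ⟨n + 1, this, by ring⟩

lemma isPWO_shift (f : LaurentSeries K) :
    Set.IsPWO ((fun n : ℤ => n - 1) '' f.support) :=
  f.isPWO_support'.image_of_monotone (fun x y hxy => by simpa using hxy)

lemma lsDeriv_add (f g : LaurentSeries K) :
    lsDeriv (f + g) = lsDeriv f + lsDeriv g := by
  ext n
  simp [lsDeriv_coeff, smul_add]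

lemma lsDeriv_smul (c : K) (f : LaurentSeries K) :
    lsDeriv (c • f) = c • lsDeriv f := by
  ext n
  simp only [lsDeriv_coeff, HahnSeries.coeff_smul]
  rw [smul_comm]

lemma lsDeriv_mul (a b : LaurentSeries K) :
    lsDeriv (a * b) = lsDeriv a * b + a * lsDeriv b := by
  ext n
  rw [HahnSeries.coeff_add, HahnSeries.coeff_mul_left' (isPWO_shift a) (support_lsDeriv a),
    HahnSeries.coeff_mul_right' (isPWO_shift b) (support_lsDeriv b), lsDeriv_coeff,
    HahnSeries.coeff_mul, Finset.smul_sum]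
  have h1 : ∀ p ∈ Finset.antidiagonal a.isPWO_support b.isPWO_support (n + 1),
      (n + 1) • (a.coeff p.1 * b.coeff p.2)
        = p.1 • (a.coeff p.1 * b.coeff p.2) + p.2 • (a.coeff p.1 * b.coeff p.2) := by
    intro p hp
    rw [Finset.mem_antidiagonal] at hp
    rw [← add_smul, hp.2.2]
  rw [Finset.sum_congr rfl h1, Finset.sum_add_distrib]
  congr 1
  · refine Finset.sum_nbij' (fun p : ℤ × ℤ => (p.1 - 1, p.2))
      (fun p : ℤ × ℤ => (p.1 + 1, p.2)) ?_ ?_ ?_ ?_ ?_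
    · intro p hp
      rw [Finset.mem_antidiagonal] at hp ⊢
      exact ⟨⟨p.1, hp.1, rfl⟩, hp.2.1, by dsimp only; omega⟩
    · intro p hp
      rw [Finset.mem_antidiagonal] at hp ⊢
      obtain ⟨⟨x, hx, hxe⟩, h2, h3⟩ := hp
      refine ⟨?_, h2, by dsimp only; simp only at hxe; omega⟩
      have : x = p.1 + 1 := by simp only at hxe; omega
      dsimp only
      rwa [← this]
    · intro p _; simp
    · intro p _; simp
    · intro p hp
      rw [Finset.mem_antidiagonal] at hp
      show _ = (lsDeriv a).coeff (p.1 - 1) * b.coeff p.2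
      rw [lsDeriv_coeff, smul_mul_assoc]
      norm_num
  · refine Finset.sum_nbij' (fun p : ℤ × ℤ => (p.1, p.2 - 1))
      (fun p : ℤ × ℤ => (p.1, p.2 + 1)) ?_ ?_ ?_ ?_ ?_
    · intro p hp
      rw [Finset.mem_antidiagonal] at hp ⊢
      exact ⟨hp.1, ⟨p.2, hp.2.1, rfl⟩, by dsimp only; omega⟩
    · intro p hp
      rw [Finset.mem_antidiagonal] at hp ⊢
      obtain ⟨h2, ⟨x, hx, hxe⟩, h3⟩ := hp
      refine ⟨h2, ?_, by dsimp only; simp only at hxe; omega⟩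
      have : x = p.2 + 1 := by simp only at hxe; omega
      dsimp only
      rwa [← this]
    · intro p _; simp
    · intro p _; simp
    · intro p hp
      rw [Finset.mem_antidiagonal] at hp
      show _ = a.coeff p.1 * (lsDeriv b).coeff (p.2 - 1)
      rw [lsDeriv_coeff, mul_smul_comm]
      norm_num

lemma lsDeriv_one : lsDeriv (1 : LaurentSeries K) = 0 := by
  ext n
  rw [lsDeriv_coeff, HahnSeries.coeff_one]
  rcases eq_or_ne (n + 1) 0 with h | h
  · rw [h]; simp
  · simp [h]

lemma eq_C_of_lsDeriv_eq_zero [CharZero K] {f : LaurentSeries K}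
    (h : lsDeriv f = 0) : f = HahnSeries.C (f.coeff 0) := by
  ext n
  rcases eq_or_ne n 0 with rfl | hn
  · simp [HahnSeries.C_apply]
  · have h2 := congrArg (fun g : LaurentSeries K => g.coeff (n - 1)) h
    simp only [lsDeriv_coeff, HahnSeries.coeff_zero, sub_add_cancel] at h2
    rcases smul_eq_zero.mp h2 with h3 | h3
    · exact absurd h3 hn
    · rw [h3, HahnSeries.C_apply, HahnSeries.coeff_single_of_ne hn]

end LsAux

namespace LsAux

variable {K : Type*} [Field K]

lemma lsDeriv_zero : lsDeriv (0 : LaurentSeries K) = 0 := by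
  ext n; simp [lsDeriv_coeff]

noncomputable def lsDerivₗ (K : Type*) [Field K] : LaurentSeries K →ₗ[K] LaurentSeries K where
  toFun := lsDeriv
  map_add' := lsDeriv_add
  map_smul' := fun c f => lsDeriv_smul c f

lemma lsDeriv_sum {ι : Type*} (s : Finset ι) (f : ι → LaurentSeries K) :
    lsDeriv (∑ i ∈ s, f i) = ∑ i ∈ s, lsDeriv (f i) :=
  map_sum (lsDerivₗ K) f s

set_option maxHeartbeats 1000000 in
open scoped Classical in
lemma key [CharZero K] {r : ℕ} (A : Matrix (Fin r) (Fin r) (LaurentSeries K))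
    {ι : Type*} [Fintype ι] (v : ι → Fin r → LaurentSeries K)
    (hv : ∀ m k, lsDeriv (v m k) + ∑ j, A k j * v m j = 0) :
    ∀ N : ℕ, ∀ c : ι → LaurentSeries K,
      (Finset.univ.filter fun m => c m ≠ 0).card ≤ N →
      (∃ m, c m ≠ 0) → (∀ k, ∑ m, c m * v m k = 0) →
      ∃ d : ι → K, (∃ m, d m ≠ 0) ∧
        ∀ k, ∑ m, (HahnSeries.C (d m) : LaurentSeries K) * v m k = 0 := by
  intro N
  induction N with
  | zero =>
    intro c hcard ⟨m, hm⟩ _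
    have h0 : (Finset.univ.filter fun m => c m ≠ 0) = ∅ :=
      Finset.card_eq_zero.mp (Nat.le_zero.mp hcard)
    exact absurd (h0 ▸ Finset.mem_filter.mpr ⟨Finset.mem_univ m, hm⟩)
      (Finset.notMem_empty m)
  | succ N ih =>
    intro c hcard ⟨i₀, hi₀⟩ hrelc
    set e : ι → LaurentSeries K := fun m => (c i₀)⁻¹ * c m with he_def
    have he₀ : e i₀ = 1 := inv_mul_cancel₀ hi₀
    have hrel : ∀ k, ∑ m, e m * v m k = 0 := by
      intro k
      simp only [he_def, mul_assoc, ← Finset.mul_sum, hrelc k, mul_zero]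
    set e' : ι → LaurentSeries K := fun m => lsDeriv (e m) with he'_def
    have hrel' : ∀ k, ∑ m, e' m * v m k = 0 := by
      intro k
      have hD : (0 : LaurentSeries K) = ∑ m, lsDeriv (e m * v m k) := by
        rw [← lsDeriv_sum, hrel k, lsDeriv_zero]
      have hsplit : ∑ m, lsDeriv (e m * v m k)
          = ∑ m, e' m * v m k + ∑ m, e m * lsDeriv (v m k) := by
        rw [← Finset.sum_add_distrib]
        exact Finset.sum_congr rfl fun m _ => lsDeriv_mul _ _
      have h2 : ∑ m, e m * lsDeriv (v m k) = 0 := by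
        have hA : ∑ m, (e m * lsDeriv (v m k) + e m * ∑ j, A k j * v m j) = 0 :=
          Finset.sum_eq_zero fun m _ => by rw [← mul_add, hv m k, mul_zero]
        rw [Finset.sum_add_distrib] at hA
        have hB : ∑ m, (e m * ∑ j, A k j * v m j) = 0 := by
          have hmm : ∀ m, e m * ∑ j, A k j * v m j
              = ∑ j, A k j * (e m * v m j) := by
            intro m
            rw [Finset.mul_sum]
            exact Finset.sum_congr rfl fun j _ => by ring
          rw [Finset.sum_congr rfl fun m _ => hmm m, Finset.sum_comm]
          exact Finset.sum_eq_zero fun j _ => by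
            rw [← Finset.mul_sum, hrel j, mul_zero]
        rw [hB, add_zero] at hA
        exact hA
      have h3 := hD.symm
      rw [hsplit, h2, add_zero] at h3
      exact h3
    by_cases hE : ∀ m, e' m = 0
    · refine ⟨fun m => (e m).coeff 0, ⟨i₀, ?_⟩, fun k => ?_⟩
      · show (e i₀).coeff 0 ≠ 0
        rw [he₀]
        simp [HahnSeries.coeff_one]
      · have hCm : ∀ m, (HahnSeries.C ((e m).coeff 0) : LaurentSeries K) = e m :=
          fun m => (eq_C_of_lsDeriv_eq_zero (hE m)).symm
        rw [Finset.sum_congr rfl fun m _ => by rw [hCm m]]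
        exact hrel k
    · push_neg at hE
      obtain ⟨m₀, hm₀⟩ := hE
      have he'i₀ : e' i₀ = 0 := by
        simp only [he'_def]
        rw [he₀, lsDeriv_one]
      have hsub : (Finset.univ.filter fun m => e' m ≠ 0)
          ⊆ (Finset.univ.filter fun m => c m ≠ 0).erase i₀ := by
        intro m hm
        rw [Finset.mem_filter] at hm
        refine Finset.mem_erase.mpr ⟨?_, Finset.mem_filter.mpr ⟨Finset.mem_univ m, ?_⟩⟩
        · rintro rfl
          exact hm.2 he'i₀
        · intro hc0
          apply hm.2
          simp only [he'_def, he_def, hc0, mul_zero]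
          exact lsDeriv_zero
      have hmem : i₀ ∈ Finset.univ.filter fun m => c m ≠ 0 :=
        Finset.mem_filter.mpr ⟨Finset.mem_univ i₀, hi₀⟩
      have hcard' : (Finset.univ.filter fun m => e' m ≠ 0).card ≤ N := by
        have h1 := Finset.card_le_card hsub
        have h2 := Finset.card_erase_of_mem hmem
        have h3 := Finset.card_pos.mpr ⟨i₀, hmem⟩
        omega
      exact ih e' hcard' ⟨m₀, hm₀⟩ hrel'

lemma indepF [CharZero K] {r : ℕ} (A : Matrix (Fin r) (Fin r) (LaurentSeries K))
    {ι : Type*} [Fintype ι] (v : ι → Fin r → LaurentSeries K)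
    (hv : ∀ m k, lsDeriv (v m k) + ∑ j, A k j * v m j = 0)
    (hK : LinearIndependent K v) : LinearIndependent (LaurentSeries K) v := by
  classical
  rw [Fintype.linearIndependent_iff] at hK ⊢
  intro c hc
  by_contra hne
  push_neg at hne
  obtain ⟨m₁, hm₁⟩ := hne
  have hcomp : ∀ k, ∑ m, c m * v m k = 0 := by
    intro k
    have h := congrFun hc k
    simpa [Finset.sum_apply] using h
  obtain ⟨d, ⟨m₂, hm₂⟩, hd⟩ := key A v hv
    (Finset.univ.filter fun m => c m ≠ 0).card c le_rfl ⟨m₁, hm₁⟩ hcomp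
  have hzero : ∑ m, d m • v m = 0 := by
    funext k
    rw [Finset.sum_apply]
    have hsm : ∀ m, (d m • v m) k = (HahnSeries.C (d m) : LaurentSeries K) * v m k := by
      intro m
      rw [Pi.smul_apply, HahnSeries.C_apply, HahnSeries.single_zero_mul_eq_smul]
    rw [Finset.sum_congr rfl fun m _ => hsm m, hd k]
    rfl
  exact hm₂ (hK d hzero m₂)

end LsAux


set_option maxHeartbeats 1000000
set_option synthInstance.maxHeartbeats 400000

/-- Let `K` be a field of characteristic zero, `r ≥ 1`, and `A` an `r × r` matrix over
`K((t))`.  The horizontal sections of the formal connection `∇ = d + A`, i.e. the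
solutions `f ∈ K((t))^r` of the linear differential system `f' + A·f = 0`, form a
`K`-vector subspace of `K((t))^r` of dimension at most `r`. -/
theorem horizontal_sections_dim_le_rank (K : Type*) [Field K] [CharZero K]
    (r : ℕ) (hr : 1 ≤ r) (A : Matrix (Fin r) (Fin r) (LaurentSeries K)) :
    ∃ W : Submodule K (Fin r → LaurentSeries K),
      (W : Set (Fin r → LaurentSeries K)) =
        {f | ∀ i, lsDeriv (f i) + ∑ j, A i j * f j = 0} ∧
      Module.rank K W ≤ r := by
  classical
  let T : (Fin r → LaurentSeries K) →ₗ[K] (Fin r → LaurentSeries K) :=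
  { toFun := fun f i => lsDeriv (f i) + ∑ j, A i j * f j
    map_add' := by
      intro f g
      funext i
      simp only [Pi.add_apply, LsAux.lsDeriv_add, mul_add, Finset.sum_add_distrib]
      abel
    map_smul' := by
      intro c f
      funext i
      simp only [Pi.smul_apply, LsAux.lsDeriv_smul, RingHom.id_apply, smul_add,
        Finset.smul_sum]
      congr 1
      exact Finset.sum_congr rfl fun x _ => by
        rw [← HahnSeries.single_zero_mul_eq_smul, ← HahnSeries.single_zero_mul_eq_smul,
          mul_left_comm] }
  refine ⟨LinearMap.ker T, ?_, ?_⟩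
  · ext f
    simp only [SetLike.mem_coe, LinearMap.mem_ker, Set.mem_setOf_eq]
    constructor
    · intro h i
      exact congrFun h i
    · intro h
      funext i
      exact h i
  · refine rank_le (R := K) (M := ↥(LinearMap.ker T)) fun s hs => ?_
    have hsol : ∀ m : s, ∀ k, lsDeriv (((m : LinearMap.ker T) : Fin r → LaurentSeries K) k)
        + ∑ j, A k j * ((m : LinearMap.ker T) : Fin r → LaurentSeries K) j = 0 := by
      intro m k
      have h := (m : LinearMap.ker T).2
      rw [LinearMap.mem_ker] at h
      exact congrFun h k
    have hK : LinearIndependent K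
        (fun m : s => ((m : LinearMap.ker T) : Fin r → LaurentSeries K)) :=
      hs.map' (LinearMap.ker T).subtype (Submodule.ker_subtype _)
    have hF := LsAux.indepF A _ hsol hK
    have hcard := hF.fintype_card_le_finrank
    rwa [Module.finrank_fintype_fun_eq_card, Fintype.card_fin, Fintype.card_coe] at hcard
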